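/- Let Ω ⊆ ℝ³ be an open set and ω ∈ ℂ with ω ≠ 0. Let μ : Ω → ℂ^{3×3} be of class C², ε : Ω → ℂ^{3×3} of class C¹, and let E, H : Ω → ℂ³ be of class C², J_m : Ω → ℂ³ of class C² and J_e : Ω → ℂ³ of class C¹. Assume the time-harmonic Maxwell system holds pointwise on Ω: curl H = iωεE + J_e and curl E = −iωμH + J_m. Then for each k ∈ {1,2,3} the k-th component H_k of H satisfies, pointwise on Ω, the second-order divergence-form equation −div(μ∇H_k) = div((∂_k μ)H − μ(e_k × (J_e + iωεE)) + (i/ω) e_k div J_m), where ∇H_k = (∂₁H_k, ∂₂H_k, ∂₃H_k). -/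

import Mathlib

open Matrix MeasureTheory

noncomputable section

/-- Partial derivative of a scalar function in the j-th coordinate direction. -/
def pd3 (j : Fin 3) (f : (Fin 3 → ℝ) → ℂ) (x : Fin 3 → ℝ) : ℂ :=
  fderiv ℝ f x (Pi.single j 1)

/-- Divergence of a vector field. -/
def vdiv (F : (Fin 3 → ℝ) → Fin 3 → ℂ) (x : Fin 3 → ℝ) : ℂ :=
  ∑ j : Fin 3, pd3 j (fun y => F y j) x

/-- Curl of a vector field. -/
def vcurl (F : (Fin 3 → ℝ) → Fin 3 → ℂ) (x : Fin 3 → ℝ) : Fin 3 → ℂ :=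
  ![pd3 1 (fun y => F y 2) x - pd3 2 (fun y => F y 1) x,
    pd3 2 (fun y => F y 0) x - pd3 0 (fun y => F y 2) x,
    pd3 0 (fun y => F y 1) x - pd3 1 (fun y => F y 0) x]

/-- Gradient of a scalar function. -/
def grad3 (u : (Fin 3 → ℝ) → ℂ) (x : Fin 3 → ℝ) : Fin 3 → ℂ := fun j => pd3 j u x

/-- Cross product on ℂ³. -/
def cross3 (a b : Fin 3 → ℂ) : Fin 3 → ℂ :=
  ![a 1 * b 2 - a 2 * b 1, a 2 * b 0 - a 0 * b 2, a 0 * b 1 - a 1 * b 0]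

/-- The k-th standard basis vector of ℝ³ viewed in ℂ³. -/
def e3 (k : Fin 3) : Fin 3 → ℂ := Pi.single k 1

/-- Entrywise partial derivative of a matrix field in the k-th direction. -/
def mpd3 (k : Fin 3) (a : (Fin 3 → ℝ) → Matrix (Fin 3) (Fin 3) ℂ) (x : Fin 3 → ℝ) :
    Matrix (Fin 3) (Fin 3) ℂ :=
  Matrix.of fun i j => pd3 k (fun y => a y i j) x

-- Auxiliary lemmas
lemma pd3_congrOn {Ω : Set (Fin 3 → ℝ)} (hΩ : IsOpen Ω) {f g : (Fin 3 → ℝ) → ℂ}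
    (h : ∀ y ∈ Ω, f y = g y) {x : Fin 3 → ℝ} (hx : x ∈ Ω) (j : Fin 3) :
    pd3 j f x = pd3 j g x := by
  unfold pd3
  rw [Filter.EventuallyEq.fderiv_eq (Filter.eventuallyEq_of_mem (hΩ.mem_nhds hx)
    (fun y hy => h y hy))]

lemma pd3_add {f g : (Fin 3 → ℝ) → ℂ} {x : Fin 3 → ℝ} (hf : DifferentiableAt ℝ f x)
    (hg : DifferentiableAt ℝ g x) (j : Fin 3) :
    pd3 j (fun y => f y + g y) x = pd3 j f x + pd3 j g x := by
  unfold pd3; rw [fderiv_fun_add hf hg]; simp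

lemma pd3_sub {f g : (Fin 3 → ℝ) → ℂ} {x : Fin 3 → ℝ} (hf : DifferentiableAt ℝ f x)
    (hg : DifferentiableAt ℝ g x) (j : Fin 3) :
    pd3 j (fun y => f y - g y) x = pd3 j f x - pd3 j g x := by
  unfold pd3; rw [fderiv_fun_sub hf hg]; simp

lemma pd3_const_mul {f : (Fin 3 → ℝ) → ℂ} {x : Fin 3 → ℝ} (hf : DifferentiableAt ℝ f x)
    (c : ℂ) (j : Fin 3) :
    pd3 j (fun y => c * f y) x = c * pd3 j f x := by
  unfold pd3; rw [fderiv_const_mul hf c]; simp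

lemma pd3_mul_const {f : (Fin 3 → ℝ) → ℂ} {x : Fin 3 → ℝ} (hf : DifferentiableAt ℝ f x)
    (c : ℂ) (j : Fin 3) :
    pd3 j (fun y => f y * c) x = pd3 j f x * c := by
  unfold pd3; rw [fderiv_mul_const hf c]; simp [mul_comm]

lemma pd3_mul {f g : (Fin 3 → ℝ) → ℂ} {x : Fin 3 → ℝ} (hf : DifferentiableAt ℝ f x)
    (hg : DifferentiableAt ℝ g x) (j : Fin 3) :
    pd3 j (fun y => f y * g y) x = f x * pd3 j g x + g x * pd3 j f x := by
  unfold pd3; rw [fderiv_fun_mul hf hg]; simp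

lemma pd3_sum {ι : Type*} {s : Finset ι} {f : ι → (Fin 3 → ℝ) → ℂ} {x : Fin 3 → ℝ}
    (hf : ∀ i ∈ s, DifferentiableAt ℝ (f i) x) (j : Fin 3) :
    pd3 j (fun y => ∑ i ∈ s, f i y) x = ∑ i ∈ s, pd3 j (f i) x := by
  unfold pd3; rw [fderiv_fun_sum hf]; simp

lemma diffAt_of_contDiffOn {Ω : Set (Fin 3 → ℝ)} (hΩ : IsOpen Ω)
    {f : (Fin 3 → ℝ) → ℂ} (hf : ContDiffOn ℝ 1 f Ω) {y : Fin 3 → ℝ} (hy : y ∈ Ω) :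
    DifferentiableAt ℝ f y :=
  (hf.contDiffAt (hΩ.mem_nhds hy)).differentiableAt one_ne_zero

lemma contDiffOn_pd3 {Ω : Set (Fin 3 → ℝ)} (hΩ : IsOpen Ω) {f : (Fin 3 → ℝ) → ℂ}
    (hf : ContDiffOn ℝ 2 f Ω) (k : Fin 3) : ContDiffOn ℝ 1 (fun y => pd3 k f y) Ω := by
  have h1 : ContDiffOn ℝ 1 (fderiv ℝ f) Ω := hf.fderiv_of_isOpen hΩ (by norm_num)
  exact h1.clm_apply contDiffOn_const

lemma pd3_comm {Ω : Set (Fin 3 → ℝ)} (hΩ : IsOpen Ω) {f : (Fin 3 → ℝ) → ℂ}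
    (hf : ContDiffOn ℝ 2 f Ω) {x : Fin 3 → ℝ} (hx : x ∈ Ω) (i j : Fin 3) :
    pd3 i (fun y => pd3 j f y) x = pd3 j (fun y => pd3 i f y) x := by
  have hd : ∀ᶠ y in nhds x, HasFDerivAt f (fderiv ℝ f y) y := by
    filter_upwards [hΩ.mem_nhds hx] with y hy
    exact (diffAt_of_contDiffOn hΩ (hf.of_le (by norm_num)) hy).hasFDerivAt
  have h1 : ContDiffOn ℝ 1 (fderiv ℝ f) Ω := hf.fderiv_of_isOpen hΩ (by norm_num)
  have h2 : DifferentiableAt ℝ (fderiv ℝ f) x :=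
    (h1.contDiffAt (hΩ.mem_nhds hx)).differentiableAt one_ne_zero
  have hsym := second_derivative_symmetric_of_eventually hd h2.hasFDerivAt
  have key : ∀ v w : Fin 3 → ℝ,
      fderiv ℝ (fun y => fderiv ℝ f y v) x w = fderiv ℝ (fderiv ℝ f) x w v := by
    intro v w
    have h3 : HasFDerivAt (fun y => fderiv ℝ f y v)
        ((ContinuousLinearMap.apply ℝ ℂ v).comp (fderiv ℝ (fderiv ℝ f) x)) x :=
      (ContinuousLinearMap.apply ℝ ℂ v).hasFDerivAt.comp x h2.hasFDerivAt
    rw [h3.fderiv]; rfl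
  unfold pd3
  rw [key, key, hsym]

lemma cross3_e3_vcurl (F : (Fin 3 → ℝ) → Fin 3 → ℂ) (y : Fin 3 → ℝ) (k j : Fin 3) :
    cross3 (e3 k) (vcurl F y) j
      = pd3 j (fun z => F z k) y - pd3 k (fun z => F z j) y := by
  fin_cases k <;> fin_cases j <;>
    simp [cross3, e3, vcurl, Pi.single_apply] <;> ring

/-- Strong form of the divergence-form elliptic equation satisfied by each component of the
magnetic field (Proposition 2.1, strong form). -/
theorem stmt_1
    (Ω : Set (Fin 3 → ℝ)) (hΩ : IsOpen Ω) (ω : ℂ) (hω : ω ≠ 0)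
    (ε μ : (Fin 3 → ℝ) → Matrix (Fin 3) (Fin 3) ℂ)
    (E H Je Jm : (Fin 3 → ℝ) → Fin 3 → ℂ)
    (hμ : ∀ i j, ContDiffOn ℝ 2 (fun x => μ x i j) Ω)
    (hε : ∀ i j, ContDiffOn ℝ 1 (fun x => ε x i j) Ω)
    (hE : ContDiffOn ℝ 2 E Ω) (hH : ContDiffOn ℝ 2 H Ω)
    (hJm : ContDiffOn ℝ 2 Jm Ω) (hJe : ContDiffOn ℝ 1 Je Ω)
    (hM1 : ∀ x ∈ Ω, vcurl H x = (Complex.I * ω) • (ε x *ᵥ E x) + Je x)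
    (hM2 : ∀ x ∈ Ω, vcurl E x = -((Complex.I * ω) • (μ x *ᵥ H x)) + Jm x) :
    ∀ x ∈ Ω, ∀ k : Fin 3,
      -vdiv (fun y => μ y *ᵥ grad3 (fun z => H z k) y) x
        = vdiv (fun y =>
            mpd3 k μ y *ᵥ H y
            - μ y *ᵥ cross3 (e3 k) (Je y + (Complex.I * ω) • (ε y *ᵥ E y))
            + ((Complex.I / ω) * vdiv Jm y) • e3 k) x := by
  intro x hx k
  classical
  have hiω : (Complex.I * ω) ≠ 0 := mul_ne_zero Complex.I_ne_zero hω
  have hHl : ∀ l : Fin 3, ContDiffOn ℝ 2 (fun z => H z l) Ω := fun l => contDiffOn_pi.mp hH l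
  have hEl : ∀ l : Fin 3, ContDiffOn ℝ 2 (fun z => E z l) Ω := fun l => contDiffOn_pi.mp hE l
  have hJml : ∀ l : Fin 3, ContDiffOn ℝ 2 (fun z => Jm z l) Ω := fun l => contDiffOn_pi.mp hJm l
  have dAt2 : ∀ {f : (Fin 3 → ℝ) → ℂ}, ContDiffOn ℝ 2 f Ω → ∀ {y}, y ∈ Ω →
      DifferentiableAt ℝ f y := by
    intro f hf y hy; exact diffAt_of_contDiffOn hΩ (hf.of_le (by norm_num)) hy
  have dAt1 : ∀ {f : (Fin 3 → ℝ) → ℂ}, ContDiffOn ℝ 1 f Ω → ∀ {y}, y ∈ Ω →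
      DifferentiableAt ℝ f y := by
    intro f hf y hy; exact diffAt_of_contDiffOn hΩ hf hy
  -- the components of μ *ᵥ H and their regularity
  have hMHc : ∀ j : Fin 3, ContDiffOn ℝ 2 (fun z => ∑ l, μ z j l * H z l) Ω :=
    fun j => ContDiffOn.sum fun l _ => (hμ j l).mul (hHl l)
  have hMulVec : ∀ (M : Matrix (Fin 3) (Fin 3) ℂ) (v : Fin 3 → ℂ) (j : Fin 3),
      (M *ᵥ v) j = ∑ l, M j l * v l := by
    intro M v j; simp [Matrix.mulVec, dotProduct]
  -- divergence of Jm is C¹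
  have hdivJm : ContDiffOn ℝ 1 (fun y => vdiv Jm y) Ω := by
    unfold vdiv
    exact ContDiffOn.sum fun j _ => contDiffOn_pd3 hΩ (hJml j) j
  -- product rule for the components of μ *ᵥ H
  have hprod : ∀ y ∈ Ω, ∀ j : Fin 3, pd3 k (fun z => ∑ l, μ z j l * H z l) y
      = (∑ l, pd3 k (fun z => μ z j l) y * H y l)
        + ∑ l, μ y j l * pd3 k (fun z => H z l) y := by
    intro y hy j
    rw [pd3_sum (fun l _ => (dAt2 (hμ j l) hy).fun_mul (dAt2 (hHl l) hy)) k,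
      ← Finset.sum_add_distrib]
    refine Finset.sum_congr rfl fun l _ => ?_
    rw [pd3_mul (dAt2 (hμ j l) hy) (dAt2 (hHl l) hy) k]; ring
  -- Step A: pointwise rewriting of the flux field on Ω
  have stepA : ∀ j : Fin 3, ∀ y ∈ Ω,
      (mpd3 k μ y *ᵥ H y
        - μ y *ᵥ cross3 (e3 k) (Je y + (Complex.I * ω) • (ε y *ᵥ E y))
        + ((Complex.I / ω) * vdiv Jm y) • e3 k) j
      = pd3 k (fun z => ∑ l, μ z j l * H z l) y
        - (μ y *ᵥ grad3 (fun z => H z k) y) j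
        + ((Complex.I / ω) * vdiv Jm y) * e3 k j := by
    intro j y hy
    have hcurl : Je y + (Complex.I * ω) • (ε y *ᵥ E y) = vcurl H y := by
      rw [hM1 y hy]; abel
    have e2 : (μ y *ᵥ cross3 (e3 k) (vcurl H y)) j
        = (μ y *ᵥ grad3 (fun z => H z k) y) j
          - ∑ l, μ y j l * pd3 k (fun z => H z l) y := by
      rw [hMulVec, hMulVec, ← Finset.sum_sub_distrib]
      refine Finset.sum_congr rfl fun l _ => ?_
      rw [cross3_e3_vcurl]
      simp only [grad3]
      ring
    have e1 : (mpd3 k μ y *ᵥ H y) j = ∑ l, pd3 k (fun z => μ z j l) y * H y l := by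
      rw [hMulVec]
      simp [mpd3]
    simp only [Pi.add_apply, Pi.sub_apply, Pi.smul_apply, smul_eq_mul, hcurl, e1, e2,
      hprod y hy j]
    ring
  -- differentiability of the three pieces at x
  have d1 : ∀ j : Fin 3,
      DifferentiableAt ℝ (fun y => pd3 k (fun z => ∑ l, μ z j l * H z l) y) x :=
    fun j => dAt1 (contDiffOn_pd3 hΩ (hMHc j) k) hx
  have hA1 : ∀ j : Fin 3,
      ContDiffOn ℝ 1 (fun y => ∑ l, μ y j l * pd3 l (fun z => H z k) y) Ω :=
    fun j => ContDiffOn.sum fun l _ =>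
      ((hμ j l).of_le (by norm_num)).mul (contDiffOn_pd3 hΩ (hHl k) l)
  have d2 : ∀ j : Fin 3,
      DifferentiableAt ℝ (fun y => (μ y *ᵥ grad3 (fun z => H z k) y) j) x :=
    fun j => dAt1 (hA1 j) hx
  have d3 : DifferentiableAt ℝ (fun y => (Complex.I / ω) * vdiv Jm y) x :=
    (dAt1 hdivJm hx).const_mul _
  have d3' : ∀ j : Fin 3,
      DifferentiableAt ℝ (fun y => ((Complex.I / ω) * vdiv Jm y) * e3 k j) x :=
    fun j => d3.mul_const _
  -- split the divergence of the right-hand field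
  have split : ∀ j : Fin 3,
      pd3 j (fun y => pd3 k (fun z => ∑ l, μ z j l * H z l) y
          - (μ y *ᵥ grad3 (fun z => H z k) y) j
          + ((Complex.I / ω) * vdiv Jm y) * e3 k j) x
        = pd3 j (fun y => pd3 k (fun z => ∑ l, μ z j l * H z l) y) x
          - pd3 j (fun y => (μ y *ᵥ grad3 (fun z => H z k) y) j) x
          + pd3 j (fun y => ((Complex.I / ω) * vdiv Jm y) * e3 k j) x := by
    intro j
    rw [pd3_add ((d1 j).fun_sub (d2 j)) (d3' j), pd3_sub (d1 j) (d2 j)]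
  -- Step D: divergence of μH equals (Iω)⁻¹ div Jm on Ω
  have hTeq : ∀ y ∈ Ω, (∑ j : Fin 3, pd3 j (fun z => ∑ l, μ z j l * H z l) y)
      = (Complex.I * ω)⁻¹ * vdiv Jm y := by
    intro y hy
    have hcomp : ∀ j : Fin 3, ∀ z ∈ Ω,
        (∑ l, μ z j l * H z l) = (Complex.I * ω)⁻¹ * (Jm z j - vcurl E z j) := by
      intro j z hz
      have h := congrFun (hM2 z hz) j
      simp only [Pi.add_apply, Pi.neg_apply, Pi.smul_apply, smul_eq_mul] at h
      rw [hMulVec] at h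
      rw [h]; field_simp; ring
    have hP : ∀ j : Fin 3, pd3 j (fun z => ∑ l, μ z j l * H z l) y
        = pd3 j (fun z => (Complex.I * ω)⁻¹ * (Jm z j - vcurl E z j)) y :=
      fun j => pd3_congrOn hΩ (fun z hz => hcomp j z hz) hy j
    have expand : ∀ (i p q a b m : Fin 3),
        pd3 i (fun z => (Complex.I * ω)⁻¹
            * (Jm z m - (pd3 p (fun w => E w a) z - pd3 q (fun w => E w b) z))) y
        = (Complex.I * ω)⁻¹ * (pd3 i (fun z => Jm z m) y
            - (pd3 i (fun z => pd3 p (fun w => E w a) z) y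
              - pd3 i (fun z => pd3 q (fun w => E w b) z) y)) := by
      intro i p q a b m
      have du : DifferentiableAt ℝ (fun z => pd3 p (fun w => E w a) z) y :=
        dAt1 (contDiffOn_pd3 hΩ (hEl a) p) hy
      have dv : DifferentiableAt ℝ (fun z => pd3 q (fun w => E w b) z) y :=
        dAt1 (contDiffOn_pd3 hΩ (hEl b) q) hy
      have dm : DifferentiableAt ℝ (fun z => Jm z m) y := dAt2 (hJml m) hy
      rw [pd3_const_mul (dm.fun_sub (du.fun_sub dv)) _ i, pd3_sub dm (du.fun_sub dv) i,
        pd3_sub du dv i]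
    have c0 : (fun z => vcurl E z 0)
        = fun z => pd3 1 (fun w => E w 2) z - pd3 2 (fun w => E w 1) z := rfl
    have c1 : (fun z => vcurl E z 1)
        = fun z => pd3 2 (fun w => E w 0) z - pd3 0 (fun w => E w 2) z := rfl
    have c2 : (fun z => vcurl E z 2)
        = fun z => pd3 0 (fun w => E w 1) z - pd3 1 (fun w => E w 0) z := rfl
    rw [Fin.sum_univ_three, hP 0, hP 1, hP 2]
    simp only [vcurl, Matrix.cons_val_zero, Matrix.cons_val_one, Matrix.head_cons,
      Matrix.cons_val_two, Matrix.tail_cons]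
    rw [expand 0 1 2 2 1 0, expand 1 2 0 0 2 1, expand 2 0 1 1 0 2]
    rw [pd3_comm hΩ (hEl 2) hy 1 0, pd3_comm hΩ (hEl 1) hy 2 0, pd3_comm hΩ (hEl 0) hy 2 1]
    have hJdiv : vdiv Jm y = pd3 0 (fun z => Jm z 0) y + pd3 1 (fun z => Jm z 1) y
        + pd3 2 (fun z => Jm z 2) y := by
      simp [vdiv, Fin.sum_univ_three]
    rw [hJdiv]; ring
  -- sum of first pieces
  have sum1 : ∑ j : Fin 3, pd3 j (fun y => pd3 k (fun z => ∑ l, μ z j l * H z l) y) x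
      = (Complex.I * ω)⁻¹ * pd3 k (fun y => vdiv Jm y) x := by
    have hc : ∀ j : Fin 3, pd3 j (fun y => pd3 k (fun z => ∑ l, μ z j l * H z l) y) x
        = pd3 k (fun y => pd3 j (fun z => ∑ l, μ z j l * H z l) y) x :=
      fun j => pd3_comm hΩ (hMHc j) hx j k
    rw [Finset.sum_congr rfl fun j _ => hc j]
    rw [← pd3_sum (fun j _ => dAt1 (contDiffOn_pd3 hΩ (hMHc j) j) hx) k]
    rw [pd3_congrOn hΩ hTeq hx k]
    exact pd3_const_mul (dAt1 hdivJm hx) _ k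
  -- sum of third pieces
  have sum3 : ∑ j : Fin 3, pd3 j (fun y => ((Complex.I / ω) * vdiv Jm y) * e3 k j) x
      = (Complex.I / ω) * pd3 k (fun y => vdiv Jm y) x := by
    have hc : ∀ j : Fin 3, pd3 j (fun y => ((Complex.I / ω) * vdiv Jm y) * e3 k j) x
        = ((Complex.I / ω) * pd3 j (fun y => vdiv Jm y) x) * e3 k j := by
      intro j
      rw [pd3_mul_const d3 _ j, pd3_const_mul (dAt1 hdivJm hx) _ j]
    rw [Finset.sum_congr rfl fun j _ => hc j]
    rw [Finset.sum_eq_single k]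
    · simp [e3]
    · intro b _ hb; simp [e3, Pi.single_apply, hb]
    · intro h; exact absurd (Finset.mem_univ k) h
  -- assemble
  have LHSeq : vdiv (fun y => μ y *ᵥ grad3 (fun z => H z k) y) x
      = ∑ j : Fin 3, pd3 j (fun y => (μ y *ᵥ grad3 (fun z => H z k) y) j) x := rfl
  have RHSeq : vdiv (fun y =>
        mpd3 k μ y *ᵥ H y
        - μ y *ᵥ cross3 (e3 k) (Je y + (Complex.I * ω) • (ε y *ᵥ E y))
        + ((Complex.I / ω) * vdiv Jm y) • e3 k) x
      = ∑ j : Fin 3, pd3 j (fun y =>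
          (mpd3 k μ y *ᵥ H y
            - μ y *ᵥ cross3 (e3 k) (Je y + (Complex.I * ω) • (ε y *ᵥ E y))
            + ((Complex.I / ω) * vdiv Jm y) • e3 k) j) x := rfl
  rw [LHSeq, RHSeq]
  have hcongr : ∀ j : Fin 3, pd3 j (fun y =>
        (mpd3 k μ y *ᵥ H y
          - μ y *ᵥ cross3 (e3 k) (Je y + (Complex.I * ω) • (ε y *ᵥ E y))
          + ((Complex.I / ω) * vdiv Jm y) • e3 k) j) x
      = pd3 j (fun y => pd3 k (fun z => ∑ l, μ z j l * H z l) y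
          - (μ y *ᵥ grad3 (fun z => H z k) y) j
          + ((Complex.I / ω) * vdiv Jm y) * e3 k j) x :=
    fun j => pd3_congrOn hΩ (fun y hy => stepA j y hy) hx j
  rw [Finset.sum_congr rfl fun j _ => hcongr j, Finset.sum_congr rfl fun j _ => split j,
    Finset.sum_add_distrib, Finset.sum_sub_distrib, sum1, sum3]
  have hinv : (Complex.I * ω)⁻¹ = -(Complex.I / ω) := by
    rw [mul_inv, Complex.inv_I]; ring
  rw [hinv]; ring
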